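/- Let 𝒢 be a family of finite graphs closed under disjoint union ⊕, and let k be a natural number. Then there exists a graph G ∈ 𝒢 such that for every H ∈ 𝒢, the graphs G and G ⊕ H satisfy exactly the same first-order sentences of the language L of quantifier depth at most k, i.e., Th_k(G) = Th_k(G ⊕ H). -/

import Mathlib

open FirstOrder Filter

namespace RandomGraph

/-- The set of potential edges of a graph on `Fin n` (pairs `(v,w)` with `v < w`).
Vertex `v : Fin n` represents the number `v + 1` of the interval `[n] = {1, …, n}`. -/
abbrev EdgeIdx (n : ℕ) := {e : Fin n × Fin n // e.1 < e.2}

/-- An outcome of the random graph on `[n]`: a choice of which potential edges are present. -/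
abbrev Sample (n : ℕ) := EdgeIdx n → Bool

/-- Adjacency of two vertices (described by their values in `Fin n`) in the outcome `ω`. -/
def adjVal {n : ℕ} (ω : Sample n) (a b : ℕ) : Prop :=
  ∃ e : EdgeIdx n, ω e = true ∧
    ((e.1.1.val = a ∧ e.1.2.val = b) ∨ (e.1.1.val = b ∧ e.1.2.val = a))

/-- Adjacency of two vertices in the outcome `ω`. -/
def sampleAdj {n : ℕ} (ω : Sample n) (v w : Fin n) : Prop := adjVal ω v.val w.val

/-- The probability of the outcome `ω` in the model `G(n, p̄)`: each pair of distinct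
vertices at distance `d` is an edge with probability `p d`, independently.  (The value `p 0` is
never used, since distinct vertices are at distance at least 1.) -/
noncomputable def sampleWeight (p : ℕ → ℝ) {n : ℕ} (ω : Sample n) : ℝ :=
  ∏ e : EdgeIdx n,
    (if ω e then p (e.1.2.val - e.1.1.val) else 1 - p (e.1.2.val - e.1.1.val))

/-- The probability of the outcome `ω` in the circular model `C(n, p̄)`: vertices `v, w` are
adjacent with probability `p (min |v-w| (n - |v-w|))`, independently. -/
noncomputable def cWeight (p : ℕ → ℝ) {n : ℕ} (ω : Sample n) : ℝ :=
  ∏ e : EdgeIdx n,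
    (if ω e then p (min (e.1.2.val - e.1.1.val) (n - (e.1.2.val - e.1.1.val)))
      else 1 - p (min (e.1.2.val - e.1.1.val) (n - (e.1.2.val - e.1.1.val))))

open scoped Classical in
/-- The probability of the event `P` in the random graph `G(n, p̄)`. -/
noncomputable def Pr (p : ℕ → ℝ) (n : ℕ) (P : Sample n → Prop) : ℝ :=
  ∑ ω : Sample n, if P ω then sampleWeight p ω else 0

open scoped Classical in
/-- The probability of the event `P` in the circular random graph `C(n, p̄)`. -/
noncomputable def cPr (p : ℕ → ℝ) (n : ℕ) (P : Sample n → Prop) : ℝ :=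
  ∑ ω : Sample n, if P ω then cWeight p ω else 0

/-! ### The language `L` of graphs (also used as the language `L^c`) -/

/-- An outcome `ω` of the random graph, viewed as a structure of `FirstOrder.Language.graph`,
the language with a single binary adjacency predicate. -/
def graphStructure {n : ℕ} (ω : Sample n) : Language.graph.Structure (Fin n) where
  RelMap | .adj => fun x => sampleAdj ω (x 0) (x 1)

/-- Satisfaction of a sentence of the language `L` in the outcome `ω`. -/
def SatL {n : ℕ} (ω : Sample n) (ψ : Language.graph.Sentence) : Prop :=
  @Language.Sentence.Realize _ _ (graphStructure ω) ψ

/-- `Prob(n, p̄; ψ)` for a sentence `ψ` of the language `L`. -/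
noncomputable def ProbL (p : ℕ → ℝ) (n : ℕ) (ψ : Language.graph.Sentence) : ℝ :=
  Pr p n fun ω => SatL ω ψ

/-- The probability that `C(n, p̄)` satisfies a sentence `ψ` of the language `L^c = L`. -/
noncomputable def cProbL (p : ℕ → ℝ) (n : ℕ) (ψ : Language.graph.Sentence) : ℝ :=
  cPr p n fun ω => SatL ω ψ

/-! ### The language `L₊` -/

/-- The constants of the language `L₊`: the first element `1` and the last element `n`. -/
inductive plusFunc : ℕ → Type
  | one : plusFunc 0
  | last : plusFunc 0

/-- The relations of `L₊`: adjacency and successor. -/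
inductive plusRel : ℕ → Type
  | adj : plusRel 2
  | succ : plusRel 2

/-- The language `L₊` with adjacency, successor (`x = y + 1`), and constants `1` and `n`. -/
def Lplus : Language := ⟨plusFunc, plusRel⟩

/-- An outcome `ω` of the random graph on `[m+1]`, as an `L₊`-structure. -/
def plusStructure {m : ℕ} (ω : Sample (m + 1)) : Lplus.Structure (Fin (m + 1)) where
  funMap | .one => fun _ => 0 | .last => fun _ => Fin.last m
  RelMap
    | .adj => fun x => sampleAdj ω (x 0) (x 1)
    | .succ => fun x => (x 0).val = (x 1).val + 1

/-- `Prob(n, p̄; ψ)` for a sentence `ψ` of `L₊` (set to `0` in the irrelevant case `n = 0`,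
where the constants cannot be interpreted). -/
noncomputable def ProbPlus (p : ℕ → ℝ) : ℕ → Lplus.Sentence → ℝ
  | 0, _ => 0
  | (m + 1), ψ => Pr p (m + 1) fun ω => @Language.Sentence.Realize _ _ (plusStructure ω) ψ

/-! ### The language `L≤` -/

/-- The relations of `L≤`: adjacency and linear order. -/
inductive leRel : ℕ → Type
  | adj : leRel 2
  | le : leRel 2

/-- The language `L≤` with adjacency and a linear order. -/
def Lle : Language := ⟨fun _ => Empty, leRel⟩

/-- An outcome `ω` of the random graph on `[n]`, as an `L≤`-structure. -/
def leStructure {n : ℕ} (ω : Sample n) : Lle.Structure (Fin n) where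
  funMap := fun f _ => Empty.elim f
  RelMap
    | .adj => fun x => sampleAdj ω (x 0) (x 1)
    | .le => fun x => x 0 ≤ x 1

/-- Satisfaction of a sentence of `L≤` in the outcome `ω`. -/
def SatLe {n : ℕ} (ω : Sample n) (ψ : Lle.Sentence) : Prop :=
  @Language.Sentence.Realize _ _ (leStructure ω) ψ

/-- `Prob(n, p̄; ψ)` for a sentence `ψ` of `L≤`. -/
noncomputable def ProbLe (p : ℕ → ℝ) (n : ℕ) (ψ : Lle.Sentence) : ℝ :=
  Pr p n fun ω => SatLe ω ψ

/-! ### The circular languages `L₊^c` and `L≤^c` -/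

/-- The relations of `L₊^c`: adjacency and cyclic successor. -/
inductive plusCRel : ℕ → Type
  | adj : plusCRel 2
  | succ : plusCRel 2

/-- The language `L₊^c`, with adjacency and cyclic successor (`x = y + 1 (mod n)`). -/
def LplusC : Language := ⟨fun _ => Empty, plusCRel⟩

/-- An outcome `ω` of the circular random graph on `[n]`, as an `L₊^c`-structure. -/
def plusCStructure {n : ℕ} (ω : Sample n) : LplusC.Structure (Fin n) where
  funMap := fun f _ => Empty.elim f
  RelMap
    | .adj => fun x => sampleAdj ω (x 0) (x 1)
    | .succ => fun x => (x 0).val = ((x 1).val + 1) % n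

/-- The probability that `C(n, p̄)` satisfies a sentence `ψ` of the language `L₊^c`. -/
noncomputable def cProbPlus (p : ℕ → ℝ) (n : ℕ) (ψ : LplusC.Sentence) : ℝ :=
  cPr p n fun ω => @Language.Sentence.Realize _ _ (plusCStructure ω) ψ

/-- The relations of `L≤^c`: adjacency and the ternary clockwise-order predicate. -/
inductive cycRel : ℕ → Type
  | adj : cycRel 2
  | btw : cycRel 3

/-- The language `L≤^c`, with adjacency and the ternary clockwise-order predicate `C`. -/
def Lcyc : Language := ⟨fun _ => Empty, cycRel⟩

/-- `C(a, b, c)`: `a ≤ b ≤ c` holds after some cyclic permutation of `(a, b, c)`. -/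
def cyclicBtw {n : ℕ} (a b c : Fin n) : Prop :=
  (a ≤ b ∧ b ≤ c) ∨ (b ≤ c ∧ c ≤ a) ∨ (c ≤ a ∧ a ≤ b)

/-- An outcome `ω` of the circular random graph on `[n]`, as an `L≤^c`-structure. -/
def cycStructure {n : ℕ} (ω : Sample n) : Lcyc.Structure (Fin n) where
  funMap := fun f _ => Empty.elim f
  RelMap
    | .adj => fun x => sampleAdj ω (x 0) (x 1)
    | .btw => fun x => cyclicBtw (x 0) (x 1) (x 2)

/-- Satisfaction of a sentence of `L≤^c` in the outcome `ω`. -/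
def SatCyc {n : ℕ} (ω : Sample n) (ψ : Lcyc.Sentence) : Prop :=
  @Language.Sentence.Realize _ _ (cycStructure ω) ψ

/-- The probability that `C(n, p̄)` satisfies a sentence `ψ` of the language `L≤^c`. -/
noncomputable def cProbCyc (p : ℕ → ℝ) (n : ℕ) (ψ : Lcyc.Sentence) : ℝ :=
  cPr p n fun ω => SatCyc ω ψ


/-- The quantifier depth of a first-order formula. -/
def qDepth {L : Language} {α : Type} : ∀ {n : ℕ}, L.BoundedFormula α n → ℕ
  | _, .falsum => 0
  | _, .equal _ _ => 0
  | _, .rel _ _ => 0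
  | _, .imp f g => max (qDepth f) (qDepth g)
  | _, .all f => qDepth f + 1

/-- `Th_k` of a simple graph: the set of sentences of the language `L` of graphs of
quantifier depth at most `k` satisfied by the graph. -/
def Thk (k : ℕ) {V : Type} (G : SimpleGraph V) : Set Language.graph.Sentence :=
  {ψ | qDepth ψ ≤ k ∧ @Language.Sentence.Realize _ _ G.structure ψ}

section
open Language

/-- Extend an assignment by one more value (at `none`). -/
def ext' {V ι : Type} (xs : ι → V) (v : V) : Option ι → V := fun o => o.elim v xs

/-- Back-and-forth (Ehrenfeucht–Fraïssé) equivalence of depth `k` between two graphs with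
distinguished tuples. -/
def BF {V W : Type} (G : SimpleGraph V) (H : SimpleGraph W) :
    ℕ → {ι : Type} → (ι → V) → (ι → W) → Prop
  | 0, _, xs, ys =>
      (∀ i j, xs i = xs j ↔ ys i = ys j) ∧
      (∀ i j, G.Adj (xs i) (xs j) ↔ H.Adj (ys i) (ys j))
  | (k+1), _, xs, ys =>
      (∀ v, ∃ w, BF G H k (ext' xs v) (ext' ys w)) ∧
      (∀ w, ∃ v, BF G H k (ext' xs v) (ext' ys w))

variable {V W X V' W' : Type} {G : SimpleGraph V} {H : SimpleGraph W} {I : SimpleGraph X}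

lemma ext'_comp_map {ι ι' : Type} (f : ι' → ι) (xs : ι → V) (v : V) :
    ext' xs v ∘ Option.map f = ext' (xs ∘ f) v := by
  funext o; cases o <;> rfl

lemma BF.comp : ∀ (k : ℕ) {ι ι' : Type} (f : ι' → ι) {xs : ι → V} {ys : ι → W},
    BF G H k xs ys → BF G H k (xs ∘ f) (ys ∘ f)
  | 0, _, _, f, xs, ys, h => ⟨fun i j => h.1 (f i) (f j), fun i j => h.2 (f i) (f j)⟩
  | (k+1), _, _, f, xs, ys, h => by
      constructor
      · intro v
        obtain ⟨w, hw⟩ := h.1 v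
        exact ⟨w, by
          have := BF.comp k (Option.map f) hw
          rwa [ext'_comp_map, ext'_comp_map] at this⟩
      · intro w
        obtain ⟨v, hv⟩ := h.2 w
        exact ⟨v, by
          have := BF.comp k (Option.map f) hv
          rwa [ext'_comp_map, ext'_comp_map] at this⟩

lemma BF.mono_succ : ∀ (k : ℕ) {ι : Type} {xs : ι → V} {ys : ι → W},
    BF G H (k+1) xs ys → BF G H k xs ys
  | 0, ι, xs, ys, h => by
      rcases isEmpty_or_nonempty ι with hι | hι
      · exact ⟨fun i => isEmptyElim i, fun i => isEmptyElim i⟩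
      · obtain ⟨i₀⟩ := hι
        obtain ⟨w, hw⟩ := h.1 (xs i₀)
        have := BF.comp 0 (some : ι → Option ι) hw
        exact ⟨fun i j => this.1 i j, fun i j => this.2 i j⟩
  | (k+1), ι, xs, ys, h => by
      constructor
      · intro v; obtain ⟨w, hw⟩ := h.1 v; exact ⟨w, BF.mono_succ k hw⟩
      · intro w; obtain ⟨v, hv⟩ := h.2 w; exact ⟨v, BF.mono_succ k hv⟩

lemma BF.le {j k : ℕ} (hjk : j ≤ k) {ι : Type} {xs : ι → V} {ys : ι → W}
    (h : BF G H k xs ys) : BF G H j xs ys := by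
  induction hjk with
  | refl => exact h
  | step _ ih => exact ih (BF.mono_succ _ h)

lemma BF.refl : ∀ (k : ℕ) {ι : Type} (xs : ι → V), BF G G k xs xs
  | 0, _, xs => ⟨fun _ _ => Iff.rfl, fun _ _ => Iff.rfl⟩
  | (k+1), _, xs => ⟨fun v => ⟨v, BF.refl k _⟩, fun v => ⟨v, BF.refl k _⟩⟩

lemma BF.symm : ∀ (k : ℕ) {ι : Type} {xs : ι → V} {ys : ι → W},
    BF G H k xs ys → BF H G k ys xs
  | 0, _, xs, ys, h => ⟨fun i j => (h.1 i j).symm, fun i j => (h.2 i j).symm⟩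
  | (k+1), _, xs, ys, h =>
      ⟨fun w => (h.2 w).imp (fun v hv => BF.symm k hv),
       fun v => (h.1 v).imp (fun w hw => BF.symm k hw)⟩

lemma BF.trans : ∀ (k : ℕ) {ι : Type} {xs : ι → V} {ys : ι → W} {zs : ι → X},
    BF G H k xs ys → BF H I k ys zs → BF G I k xs zs
  | 0, _, xs, ys, zs, h1, h2 =>
      ⟨fun i j => (h1.1 i j).trans (h2.1 i j), fun i j => (h1.2 i j).trans (h2.2 i j)⟩
  | (k+1), _, xs, ys, zs, h1, h2 => by
      constructor
      · intro v
        obtain ⟨w, hw⟩ := h1.1 v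
        obtain ⟨x, hx⟩ := h2.1 w
        exact ⟨x, BF.trans k hw hx⟩
      · intro x
        obtain ⟨w, hw⟩ := h2.2 x
        obtain ⟨v, hv⟩ := h1.2 w
        exact ⟨v, BF.trans k hv hw⟩

lemma BF.ofIso (e : G ≃g H) : ∀ (k : ℕ) {ι : Type} (xs : ι → V), BF G H k xs (⇑e ∘ xs)
  | 0, _, xs =>
      ⟨fun i j => by simp [e.toEquiv.apply_eq_iff_eq], fun i j => by
        simp [e.map_adj_iff]⟩
  | (k+1), _, xs => by
      constructor
      · intro v
        refine ⟨e v, ?_⟩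
        have h : ⇑e ∘ ext' xs v = ext' (⇑e ∘ xs) (e v) := by funext o; cases o <;> rfl
        have := BF.ofIso e k (ext' xs v)
        rwa [h] at this
      · intro w
        refine ⟨e.symm w, ?_⟩
        have h : ⇑e ∘ ext' xs (e.symm w) = ext' (⇑e ∘ xs) w := by
          funext o; cases o
          · simp [ext']
          · rfl
        have := BF.ofIso e k (ext' xs (e.symm w))
        rwa [h] at this

lemma BF.sumCongr {G : SimpleGraph V} {G' : SimpleGraph V'} {H : SimpleGraph W}
    {H' : SimpleGraph W'} :
    ∀ (k : ℕ) {ι₁ ι₂ : Type} {xs₁ : ι₁ → V} {ys₁ : ι₁ → V'} {xs₂ : ι₂ → W} {ys₂ : ι₂ → W'},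
    BF G G' k xs₁ ys₁ → BF H H' k xs₂ ys₂ →
    BF (G ⊕g H) (G' ⊕g H') k
      (Sum.elim (Sum.inl ∘ xs₁) (Sum.inr ∘ xs₂)) (Sum.elim (Sum.inl ∘ ys₁) (Sum.inr ∘ ys₂))
  | 0, _, _, xs₁, ys₁, xs₂, ys₂, h1, h2 => by
      constructor
      · rintro (i | i) (j | j) <;> simp [h1.1, h2.1]
      · rintro (i | i) (j | j) <;> simp [h1.2, h2.2]
  | (k+1), ι₁, ι₂, xs₁, ys₁, xs₂, ys₂, h1, h2 => by
      constructor
      · rintro (a | a)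
        · obtain ⟨b, hb⟩ := h1.1 a
          refine ⟨Sum.inl b, ?_⟩
          have := BF.comp k (fun o : Option (ι₁ ⊕ ι₂) =>
            (o.elim (Sum.inl none) (Sum.map some id) : Option ι₁ ⊕ ι₂))
            (BF.sumCongr k hb (BF.mono_succ k h2))
          convert this using 1 <;>
            · funext o; rcases o with _ | (i | i) <;> rfl
        · obtain ⟨b, hb⟩ := h2.1 a
          refine ⟨Sum.inr b, ?_⟩
          have := BF.comp k (fun o : Option (ι₁ ⊕ ι₂) =>
            (o.elim (Sum.inr none) (Sum.map id some) : ι₁ ⊕ Option ι₂))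
            (BF.sumCongr k (BF.mono_succ k h1) hb)
          convert this using 1 <;>
            · funext o; rcases o with _ | (i | i) <;> rfl
      · rintro (b | b)
        · obtain ⟨a, ha⟩ := h1.2 b
          refine ⟨Sum.inl a, ?_⟩
          have := BF.comp k (fun o : Option (ι₁ ⊕ ι₂) =>
            (o.elim (Sum.inl none) (Sum.map some id) : Option ι₁ ⊕ ι₂))
            (BF.sumCongr k ha (BF.mono_succ k h2))
          convert this using 1 <;>
            · funext o; rcases o with _ | (i | i) <;> rfl
        · obtain ⟨a, ha⟩ := h2.2 b
          refine ⟨Sum.inr a, ?_⟩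
          have := BF.comp k (fun o : Option (ι₁ ⊕ ι₂) =>
            (o.elim (Sum.inr none) (Sum.map id some) : ι₁ ⊕ Option ι₂))
            (BF.sumCongr k (BF.mono_succ k h1) ha)
          convert this using 1 <;>
            · funext o; rcases o with _ | (i | i) <;> rfl

/-! ### Realization of bounded formulas is invariant under `BF` -/


lemma graph_term_eq {α : Type} (t : Language.graph.Term α) : ∃ a, t = Language.Term.var a := by
  cases t with
  | var a => exact ⟨a, rfl⟩
  | func f ts => exact Empty.elim f

/-- Realization w.r.t. the graph structure. -/
def RealizeG {V : Type} (G : SimpleGraph V) {n : ℕ} (φ : Language.graph.BoundedFormula Empty n)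
    (v : Empty → V) (xs : Fin n → V) : Prop :=
  @Language.BoundedFormula.Realize _ _ G.structure _ _ φ v xs

lemma ext'_comp_lastCases {n : ℕ} (xs : Fin n → V) (a : V) :
    (ext' xs a) ∘ (fun i : Fin (n+1) => Fin.lastCases none (fun j => some j) i) = Fin.snoc xs a := by
  funext i
  induction i using Fin.lastCases with
  | last => simp [ext']
  | cast j => simp [ext']

lemma realize_bf {G : SimpleGraph V} {H : SimpleGraph W} :
    ∀ {n : ℕ} (φ : Language.graph.BoundedFormula Empty n) (k : ℕ), qDepth φ ≤ k →
    ∀ (v : Empty → V) (v' : Empty → W) (xs : Fin n → V) (ys : Fin n → W),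
      BF G H k xs ys → (RealizeG G φ v xs ↔ RealizeG H φ v' ys) := by
  intro n φ
  induction φ with
  | falsum => intro k hk v v' xs ys hBF; exact Iff.rfl
  | equal t₁ t₂ =>
      intro k hk v v' xs ys hBF
      have h0 : BF G H 0 xs ys := BF.le (Nat.zero_le k) hBF
      obtain ⟨a₁, rfl⟩ := graph_term_eq t₁
      obtain ⟨a₂, rfl⟩ := graph_term_eq t₂
      rcases a₁ with e | j₁
      · exact e.elim
      rcases a₂ with e | j₂
      · exact e.elim
      show xs j₁ = xs j₂ ↔ ys j₁ = ys j₂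
      exact h0.1 j₁ j₂
  | rel R ts =>
      intro k hk v v' xs ys hBF
      have h0 : BF G H 0 xs ys := BF.le (Nat.zero_le k) hBF
      cases R
      obtain ⟨a₁, h₁⟩ := graph_term_eq (ts 0)
      obtain ⟨a₂, h₂⟩ := graph_term_eq (ts 1)
      rcases a₁ with e | j₁
      · exact e.elim
      rcases a₂ with e | j₂
      · exact e.elim
      show G.Adj (@Language.Term.realize _ _ G.structure _ (Sum.elim v xs) (ts 0))
          (@Language.Term.realize _ _ G.structure _ (Sum.elim v xs) (ts 1)) ↔
        H.Adj (@Language.Term.realize _ _ H.structure _ (Sum.elim v' ys) (ts 0))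
          (@Language.Term.realize _ _ H.structure _ (Sum.elim v' ys) (ts 1))
      rw [h₁, h₂]
      exact h0.2 j₁ j₂
  | imp f g ihf ihg =>
      intro k hk v v' xs ys hBF
      have hf : qDepth f ≤ k := le_trans (le_max_left _ _) hk
      have hg : qDepth g ≤ k := le_trans (le_max_right _ _) hk
      exact imp_congr (ihf k hf v v' xs ys hBF) (ihg k hg v v' xs ys hBF)
  | @all n' f ih =>
      intro k hk v v' xs ys hBF
      have hk' : qDepth f + 1 ≤ k := hk
      have hBF' : BF G H (qDepth f + 1) xs ys := BF.le hk' hBF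
      show (∀ a, RealizeG G f v (Fin.snoc xs a)) ↔ (∀ b, RealizeG H f v' (Fin.snoc ys b))
      constructor
      · intro hG b
        obtain ⟨a, ha⟩ := hBF'.2 b
        have hc := BF.comp (qDepth f)
          (fun i : Fin (n'+1) => Fin.lastCases none (fun j => some j) i) ha
        rw [ext'_comp_lastCases, ext'_comp_lastCases] at hc
        exact (ih (qDepth f) le_rfl v v' _ _ hc).mp (hG a)
      · intro hH a
        obtain ⟨b, hb⟩ := hBF'.1 a
        have hc := BF.comp (qDepth f)
          (fun i : Fin (n'+1) => Fin.lastCases none (fun j => some j) i) hb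
        rw [ext'_comp_lastCases, ext'_comp_lastCases] at hc
        exact (ih (qDepth f) le_rfl v v' _ _ hc).mpr (hH b)

lemma sentence_bf {G : SimpleGraph V} {H : SimpleGraph W} {k : ℕ}
    (hBF : BF G H k (fun i : Fin 0 => i.elim0) (fun i : Fin 0 => i.elim0))
    (ψ : Language.graph.Sentence) (hq : qDepth ψ ≤ k) :
    (@Language.Sentence.Realize _ _ G.structure ψ ↔ @Language.Sentence.Realize _ _ H.structure ψ) := by
  have h1 : (fun i : Fin 0 => (i.elim0 : V)) = (default : Fin 0 → V) := funext fun i => i.elim0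
  have h2 : (fun i : Fin 0 => (i.elim0 : W)) = (default : Fin 0 → W) := funext fun i => i.elim0
  rw [h1, h2] at hBF
  exact realize_bf ψ k hq default default _ _ hBF

/-! ### k-types: finitely many `BF`-classes -/

def Tt : ℕ → ℕ → Type
  | 0, n => (Fin n → Fin n → Bool) × (Fin n → Fin n → Bool)
  | (k+1), n => Set (Tt k (n+1))

instance Tt.finite : ∀ (k n : ℕ), Finite (Tt k n)
  | 0, n => by unfold Tt; infer_instance
  | (k+1), n => by
      unfold Tt
      haveI := Tt.finite k (n+1)
      exact Finite.of_equiv (Tt k (n+1) → Prop) (Equiv.refl _)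

open scoped Classical in
noncomputable def tau : ∀ (k : ℕ) {V : Type} (_G : SimpleGraph V) {n : ℕ} (_xs : Fin n → V), Tt k n
  | 0, _, G, _, xs =>
      ((fun i j => decide (xs i = xs j)), (fun i j => decide (G.Adj (xs i) (xs j))))
  | (k+1), _, G, _, xs => {t | ∃ v, t = tau k G (Fin.snoc xs v)}

lemma snoc_comp_optElim {n : ℕ} (xs : Fin n → V) (v : V) :
    (Fin.snoc xs v : Fin (n+1) → V) ∘ (fun o : Option (Fin n) => o.elim (Fin.last n) Fin.castSucc)
      = ext' xs v := by
  funext o; cases o <;> simp [ext']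

lemma tau_eq_bf : ∀ (k : ℕ) {V W : Type} (G : SimpleGraph V) (H : SimpleGraph W) {n : ℕ}
    (xs : Fin n → V) (ys : Fin n → W), tau k G xs = tau k H ys → BF G H k xs ys
  | 0, _, _, G, H, n, xs, ys, h => by
      simp only [tau] at h
      injection h with h1 h2
      constructor
      · intro i j
        have := congrFun (congrFun h1 i) j
        simpa using this
      · intro i j
        have := congrFun (congrFun h2 i) j
        simpa using this
  | (k+1), _, _, G, H, n, xs, ys, h => by
      constructor
      · intro v
        have hv : tau k G (Fin.snoc xs v) ∈ {t | ∃ v, t = tau k G (Fin.snoc xs v)} := ⟨v, rfl⟩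
        rw [show ({t | ∃ v, t = tau k G (Fin.snoc xs v)} : Set (Tt k (n+1)))
            = {t | ∃ w, t = tau k H (Fin.snoc ys w)} from h] at hv
        obtain ⟨w, hw⟩ := hv
        refine ⟨w, ?_⟩
        have := BF.comp k (fun o : Option (Fin n) => o.elim (Fin.last n) Fin.castSucc)
          (tau_eq_bf k G H (Fin.snoc xs v) (Fin.snoc ys w) hw)
        rwa [snoc_comp_optElim, snoc_comp_optElim] at this
      · intro w
        have hw : tau k H (Fin.snoc ys w) ∈ {t | ∃ w, t = tau k H (Fin.snoc ys w)} := ⟨w, rfl⟩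
        rw [show ({t | ∃ w, t = tau k H (Fin.snoc ys w)} : Set (Tt k (n+1)))
            = {t | ∃ v, t = tau k G (Fin.snoc xs v)} from h.symm] at hw
        obtain ⟨v, hv⟩ := hw
        refine ⟨v, ?_⟩
        have := BF.comp k (fun o : Option (Fin n) => o.elim (Fin.last n) Fin.castSucc)
          (tau_eq_bf k G H (Fin.snoc xs v) (Fin.snoc ys w) hv.symm)
        rwa [snoc_comp_optElim, snoc_comp_optElim] at this

/-! ### The copies lemma -/

/-- `m` disjoint copies of `G`, on vertex type `Fin m × V`. -/
def copies (m : ℕ) (G : SimpleGraph V) : SimpleGraph (Fin m × V) where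
  Adj a b := a.1 = b.1 ∧ G.Adj a.2 b.2
  symm := ⟨fun a b h => ⟨h.1.symm, h.2.symm⟩⟩
  loopless := ⟨fun a h => G.loopless.irrefl a.2 h.2⟩

lemma copies_bf (G : SimpleGraph V) :
    ∀ (j : ℕ) {m m' : ℕ} {ι : Type} (a : ι → Fin m) (b : ι → Fin m') (c : ι → V)
      (hab : ∀ i i', a i = a i' ↔ b i = b i')
      (t : Finset (Fin m)) (t' : Finset (Fin m'))
      (hta : ∀ i, a i ∈ t) (htb : ∀ i, b i ∈ t')
      (hc : t.card + j ≤ m) (hc' : t'.card + j ≤ m'),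
      BF (copies m G) (copies m' G) j (fun i => (a i, c i)) (fun i => (b i, c i))
  | 0, m, m', ι, a, b, c, hab, t, t', hta, htb, hc, hc' => by
      constructor
      · intro i j
        simp only [Prod.mk.injEq]
        exact and_congr (hab i j) Iff.rfl
      · intro i j
        exact and_congr (hab i j) Iff.rfl
  | (j+1), m, m', ι, a, b, c, hab, t, t', hta, htb, hc, hc' => by
      have fresh : ∀ {mm : ℕ} (tt : Finset (Fin mm)), tt.card + (j+1) ≤ mm → ∃ x, x ∉ tt := by
        intro mm tt h
        by_contra hcon
        push_neg at hcon
        have : tt = Finset.univ := Finset.eq_univ_iff_forall.mpr hcon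
        rw [this, Finset.card_univ, Fintype.card_fin] at h
        omega
      constructor
      · rintro ⟨av, xv⟩
        by_cases hex : ∃ i, a i = av
        · obtain ⟨i₀, hi₀⟩ := hex
          refine ⟨(b i₀, xv), ?_⟩
          have hab' : ∀ o o', ext' a av o = ext' a av o' ↔ ext' b (b i₀) o = ext' b (b i₀) o' := by
            rintro (_ | i) (_ | i')
            · simp
            · simpa [ext', ← hi₀] using hab i₀ i'
            · simpa [ext', ← hi₀] using hab i i₀
            · exact hab i i'
          have hta' : ∀ o, ext' a av o ∈ t := by
            rintro (_ | i)
            · simpa [ext', ← hi₀] using hta i₀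
            · exact hta i
          have htb' : ∀ o, ext' b (b i₀) o ∈ t' := by
            rintro (_ | i)
            · exact htb i₀
            · exact htb i
          have key := copies_bf G j (ext' a av) (ext' b (b i₀)) (ext' c xv) hab' t t' hta' htb'
            (by omega) (by omega)
          convert key using 1 <;> · funext o; cases o <;> rfl
        · obtain ⟨bv, hbv⟩ := fresh t' hc'
          refine ⟨(bv, xv), ?_⟩
          have hab' : ∀ o o', ext' a av o = ext' a av o' ↔ ext' b bv o = ext' b bv o' := by
            rintro (_ | i) (_ | i')
            · simp
            · show av = a i' ↔ bv = b i'
              exact iff_of_false (fun h => hex ⟨i', h.symm⟩) (fun h => hbv (h ▸ htb i'))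
            · show a i = av ↔ b i = bv
              exact iff_of_false (fun h => hex ⟨i, h⟩) (fun h => hbv (h.symm ▸ htb i))
            · exact hab i i'
          have key := copies_bf G j (ext' a av) (ext' b bv) (ext' c xv) hab'
            (insert av t) (insert bv t')
            (by rintro (_ | i); · exact Finset.mem_insert_self _ _
                · exact Finset.mem_insert_of_mem (hta i))
            (by rintro (_ | i); · exact Finset.mem_insert_self _ _
                · exact Finset.mem_insert_of_mem (htb i))
            (by have := Finset.card_insert_le av t; omega)
            (by have := Finset.card_insert_le bv t'; omega)
          convert key using 1 <;> · funext o; cases o <;> rfl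
      · rintro ⟨bv, xv⟩
        by_cases hex : ∃ i, b i = bv
        · obtain ⟨i₀, hi₀⟩ := hex
          refine ⟨(a i₀, xv), ?_⟩
          have hab' : ∀ o o', ext' a (a i₀) o = ext' a (a i₀) o' ↔ ext' b bv o = ext' b bv o' := by
            rintro (_ | i) (_ | i')
            · simp
            · simpa [ext', ← hi₀] using hab i₀ i'
            · simpa [ext', ← hi₀] using hab i i₀
            · exact hab i i'
          have hta' : ∀ o, ext' a (a i₀) o ∈ t := by
            rintro (_ | i)
            · exact hta i₀
            · exact hta i
          have htb' : ∀ o, ext' b bv o ∈ t' := by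
            rintro (_ | i)
            · simpa [ext', ← hi₀] using htb i₀
            · exact htb i
          have key := copies_bf G j (ext' a (a i₀)) (ext' b bv) (ext' c xv) hab' t t' hta' htb'
            (by omega) (by omega)
          convert key using 1 <;> · funext o; cases o <;> rfl
        · obtain ⟨av, hav⟩ := fresh t hc
          refine ⟨(av, xv), ?_⟩
          have hab' : ∀ o o', ext' a av o = ext' a av o' ↔ ext' b bv o = ext' b bv o' := by
            rintro (_ | i) (_ | i')
            · simp
            · show av = a i' ↔ bv = b i'
              exact iff_of_false (fun h => hav (h ▸ hta i')) (fun h => hex ⟨i', h.symm⟩)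
            · show a i = av ↔ b i = bv
              exact iff_of_false (fun h => hav (h.symm ▸ hta i)) (fun h => hex ⟨i, h⟩)
            · exact hab i i'
          have key := copies_bf G j (ext' a av) (ext' b bv) (ext' c xv) hab'
            (insert av t) (insert bv t')
            (by rintro (_ | i); · exact Finset.mem_insert_self _ _
                · exact Finset.mem_insert_of_mem (hta i))
            (by rintro (_ | i); · exact Finset.mem_insert_self _ _
                · exact Finset.mem_insert_of_mem (htb i))
            (by have := Finset.card_insert_le av t; omega)
            (by have := Finset.card_insert_le bv t'; omega)
          convert key using 1 <;> · funext o; cases o <;> rfl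

/-! ### The layer of abstract graphs (sigma types) -/

def EQk (k : ℕ) (A B : Σ V : Type, SimpleGraph V) : Prop :=
  BF A.2 B.2 k (fun i : Fin 0 => i.elim0) (fun i : Fin 0 => i.elim0)

lemma bf_fin0 {G : SimpleGraph V} {H : SimpleGraph W} {k : ℕ} {ι : Type} [IsEmpty ι]
    {xs : ι → V} {ys : ι → W} (h : BF G H k xs ys) :
    BF G H k (fun i : Fin 0 => i.elim0) (fun i : Fin 0 => i.elim0) := by
  have := BF.comp k (fun i : Fin 0 => (i.elim0 : ι)) h
  have e1 : xs ∘ (fun i : Fin 0 => (i.elim0 : ι)) = fun i : Fin 0 => i.elim0 :=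
    funext fun i => i.elim0
  have e2 : ys ∘ (fun i : Fin 0 => (i.elim0 : ι)) = fun i : Fin 0 => i.elim0 :=
    funext fun i => i.elim0
  rwa [e1, e2] at this

lemma EQk.refl (k : ℕ) (A : Σ V : Type, SimpleGraph V) : EQk k A A := BF.refl k _

lemma EQk.symm {k : ℕ} {A B : Σ V : Type, SimpleGraph V} (h : EQk k A B) : EQk k B A :=
  BF.symm k h

lemma EQk.trans {k : ℕ} {A B C : Σ V : Type, SimpleGraph V} (h1 : EQk k A B)
    (h2 : EQk k B C) : EQk k A C := BF.trans k h1 h2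

lemma EQk.ofIso {k : ℕ} {A B : Σ V : Type, SimpleGraph V} (e : A.2 ≃g B.2) : EQk k A B := by
  have := BF.ofIso e k (fun i : Fin 0 => i.elim0)
  rwa [show ⇑e ∘ (fun i : Fin 0 => i.elim0) = (fun i : Fin 0 => i.elim0) from
    funext fun i => i.elim0] at this

def sumG (A B : Σ V : Type, SimpleGraph V) : Σ V : Type, SimpleGraph V :=
  ⟨A.1 ⊕ B.1, A.2 ⊕g B.2⟩

lemma EQk.sumCongr {k : ℕ} {A A' B B' : Σ V : Type, SimpleGraph V}
    (h1 : EQk k A A') (h2 : EQk k B B') : EQk k (sumG A B) (sumG A' B') :=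
  bf_fin0 (ι := Fin 0 ⊕ Fin 0) (BF.sumCongr k h1 h2)

lemma copies_adj {m : ℕ} {G : SimpleGraph V} (a b : Fin m × V) :
    (copies m G).Adj a b ↔ (a.1 = b.1 ∧ G.Adj a.2 b.2) := Iff.rfl

/-- `G` is isomorphic to one copy of `G`. -/
def isoOne (G : SimpleGraph V) : G ≃g copies 1 G where
  toFun v := ((0 : Fin 1), v)
  invFun p := p.2
  left_inv v := rfl
  right_inv p := by obtain ⟨i, x⟩ := p; rw [Subsingleton.elim (0 : Fin 1) i]
  map_rel_iff' := by intro a b; simp [copies_adj]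

/-- Adding one more copy. -/
def isoSnoc (m : ℕ) (G : SimpleGraph V) : (copies m G ⊕g G) ≃g copies (m+1) G where
  toFun := Sum.elim (fun p => (p.1.castSucc, p.2)) (fun v => (Fin.last m, v))
  invFun p := Fin.lastCases (motive := fun _ => (Fin m × V) ⊕ V)
    (Sum.inr p.2) (fun i => Sum.inl (i, p.2)) p.1
  left_inv := by rintro (⟨i, x⟩ | x) <;> simp
  right_inv := by
    rintro ⟨i, x⟩
    induction i using Fin.lastCases with
    | last => simp
    | cast j => simp
  map_rel_iff' := by
    rintro (⟨i, x⟩ | x) (⟨j, y⟩ | y) <;>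
      simp [copies_adj, Fin.castSucc_inj, (Fin.castSucc_lt_last _).ne,
        (Fin.castSucc_lt_last _).ne']

def powG (A : Σ V : Type, SimpleGraph V) : ℕ → Σ V : Type, SimpleGraph V
  | 0 => A
  | (j+1) => sumG (powG A j) A

lemma powG_eqk_copies (k : ℕ) (A : Σ V : Type, SimpleGraph V) :
    ∀ j : ℕ, EQk k (powG A j) ⟨Fin (j+1) × A.1, copies (j+1) A.2⟩
  | 0 => EQk.ofIso (isoOne A.2)
  | (j+1) =>
      EQk.trans (EQk.sumCongr (powG_eqk_copies k A j) (EQk.refl k A))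
        (EQk.ofIso (isoSnoc (j+1) A.2))

lemma copies_eqk {k m m' : ℕ} (G : SimpleGraph V) (hm : k ≤ m) (hm' : k ≤ m') :
    EQk k ⟨Fin m × V, copies m G⟩ ⟨Fin m' × V, copies m' G⟩ := by
  have := copies_bf G k (fun i : Fin 0 => i.elim0) (fun i : Fin 0 => i.elim0)
    (fun i : Fin 0 => i.elim0) (fun i => i.elim0) ∅ ∅ (fun i => i.elim0) (fun i => i.elim0)
    (by simpa using hm) (by simpa using hm')
  have e1 : (fun i : Fin 0 => ((fun i : Fin 0 => i.elim0) i, (fun i : Fin 0 => i.elim0) i))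
      = (fun i : Fin 0 => (i.elim0 : Fin m × V)) := funext fun i => i.elim0
  exact bf_fin0 (ι := Fin 0) this

lemma absorb (k : ℕ) (A : Σ V : Type, SimpleGraph V) :
    EQk k (sumG (powG A k) A) (powG A k) := by
  show EQk k (powG A (k+1)) (powG A k)
  exact EQk.trans (powG_eqk_copies k A (k+1))
    (EQk.trans (copies_eqk A.2 (by omega) (by omega)) (EQk.symm (powG_eqk_copies k A k)))

lemma eqk_shuffle (k : ℕ) (X Y Z : Σ V : Type, SimpleGraph V) :
    EQk k (sumG (sumG X Y) Z) (sumG (sumG X Z) Y) :=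
  EQk.trans
    (EQk.ofIso (A := sumG (sumG X Y) Z) (B := sumG X (sumG Y Z)) (SimpleGraph.Iso.sumAssoc))
    (EQk.trans
      (EQk.sumCongr (EQk.refl k X)
        (EQk.ofIso (A := sumG Y Z) (B := sumG Z Y) (SimpleGraph.Iso.sumComm)))
      (EQk.symm (EQk.ofIso (A := sumG (sumG X Z) Y) (B := sumG X (sumG Z Y))
        (SimpleGraph.Iso.sumAssoc))))

def sumListG : (Σ V : Type, SimpleGraph V) → List (Σ V : Type, SimpleGraph V) →
    Σ V : Type, SimpleGraph V
  | A, [] => A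
  | A, (B :: l) => sumListG (sumG A B) l

lemma sumListG_mem {𝒢 : Set (Σ V : Type, SimpleGraph V)}
    (hclosed : ∀ G ∈ 𝒢, ∀ H ∈ 𝒢, sumG G H ∈ 𝒢) :
    ∀ (l : List (Σ V : Type, SimpleGraph V)) (A), A ∈ 𝒢 → (∀ B ∈ l, B ∈ 𝒢) →
      sumListG A l ∈ 𝒢
  | [], A, hA, _ => hA
  | (B :: l), A, hA, hl =>
      sumListG_mem hclosed l (sumG A B)
        (hclosed _ hA _ (hl B List.mem_cons_self))
        (fun C hC => hl C (List.mem_cons_of_mem _ hC))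

lemma powG_mem {𝒢 : Set (Σ V : Type, SimpleGraph V)}
    (hclosed : ∀ G ∈ 𝒢, ∀ H ∈ 𝒢, sumG G H ∈ 𝒢)
    {A : Σ V : Type, SimpleGraph V} (hA : A ∈ 𝒢) : ∀ j, powG A j ∈ 𝒢
  | 0 => hA
  | (j+1) => hclosed _ (powG_mem hclosed hA j) _ hA

lemma absorb_sumListG (k : ℕ) :
    ∀ (l : List (Σ V : Type, SimpleGraph V)) (A B : Σ V : Type, SimpleGraph V),
    (EQk k (sumG A B) A ∨ ∃ C ∈ l, EQk k (sumG C B) C) →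
    EQk k (sumG (sumListG A l) B) (sumListG A l)
  | [], A, B, h => by
      rcases h with h | ⟨C, hC, _⟩
      · exact h
      · exact absurd hC List.not_mem_nil
  | (C :: l), A, B, h => by
      show EQk k (sumG (sumListG (sumG A C) l) B) (sumListG (sumG A C) l)
      apply absorb_sumListG k l (sumG A C) B
      rcases h with h | ⟨D, hD, hDabs⟩
      · left
        exact EQk.trans (eqk_shuffle k A C B) (EQk.sumCongr h (EQk.refl k C))
      · rcases List.mem_cons.mp hD with rfl | hD'
        · left
          exact EQk.trans
            (EQk.ofIso (A := sumG (sumG A D) B) (B := sumG A (sumG D B))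
              (SimpleGraph.Iso.sumAssoc))
            (EQk.sumCongr (EQk.refl k A) hDabs)
        · right
          exact ⟨D, hD', hDabs⟩


end

/-- Let `𝒢` be a (nonempty) family of finite graphs closed under disjoint
union `⊕g`, and let `k` be a natural number.  Then there is a graph `G ∈ 𝒢` such that for
every `H ∈ 𝒢` the graphs `G` and `G ⊕g H` satisfy exactly the same first-order sentences of
the language `L` of quantifier depth at most `k`. -/
theorem statement_18 (𝒢 : Set (Σ V : Type, SimpleGraph V))
    (hne : 𝒢.Nonempty)
    (hfin : ∀ G ∈ 𝒢, Finite G.1)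
    (hclosed : ∀ G ∈ 𝒢, ∀ H ∈ 𝒢, (⟨G.1 ⊕ H.1, G.2 ⊕g H.2⟩ : Σ V : Type, SimpleGraph V) ∈ 𝒢)
    (k : ℕ) :
    ∃ G ∈ 𝒢, ∀ H ∈ 𝒢, Thk k G.2 = Thk k (G.2 ⊕g H.2) := by
  classical
  obtain ⟨A₀, hA₀⟩ := hne
  have hclosed' : ∀ G ∈ 𝒢, ∀ H ∈ 𝒢, sumG G H ∈ 𝒢 := hclosed
  have hrep : ∃ l : List (Σ V : Type, SimpleGraph V),
      (∀ A ∈ l, A ∈ 𝒢) ∧ ∀ H ∈ 𝒢, ∃ A ∈ l, EQk k A H := by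
    have main : ∀ s : Set (Tt k 0), s.Finite →
        ∃ l : List (Σ V : Type, SimpleGraph V), (∀ A ∈ l, A ∈ 𝒢) ∧
          ∀ H, H ∈ 𝒢 → tau k H.2 (fun i : Fin 0 => i.elim0) ∈ s →
            ∃ A ∈ l, tau k A.2 (fun i : Fin 0 => i.elim0)
              = tau k H.2 (fun i : Fin 0 => i.elim0) := by
      intro s hs
      refine Set.Finite.induction_on
        (motive := fun s _ => ∃ l : List (Σ V : Type, SimpleGraph V), (∀ A ∈ l, A ∈ 𝒢) ∧
          ∀ H, H ∈ 𝒢 → tau k H.2 (fun i : Fin 0 => i.elim0) ∈ s →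
            ∃ A ∈ l, tau k A.2 (fun i : Fin 0 => i.elim0)
              = tau k H.2 (fun i : Fin 0 => i.elim0)) s hs ?_ ?_
      · exact ⟨[], by simp, fun H _ h => absurd h (Set.notMem_empty _)⟩
      · intro t s' _ _ ih
        obtain ⟨l, hl1, hl2⟩ := ih
        by_cases ht : ∃ A ∈ 𝒢, tau k A.2 (fun i : Fin 0 => i.elim0) = t
        · obtain ⟨A, hA, hAt⟩ := ht
          refine ⟨A :: l, ?_, ?_⟩
          · intro B hB
            rcases List.mem_cons.mp hB with rfl | hB'
            exacts [hA, hl1 B hB']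
          · intro H hH hmem
            rcases Set.mem_insert_iff.mp hmem with hmem | hmem
            · exact ⟨A, List.mem_cons_self, by rw [hAt, hmem]⟩
            · obtain ⟨A', hA', h'⟩ := hl2 H hH hmem
              exact ⟨A', List.mem_cons_of_mem _ hA', h'⟩
        · refine ⟨l, hl1, fun H hH hmem => ?_⟩
          rcases Set.mem_insert_iff.mp hmem with hmem | hmem
          · exact absurd ⟨H, hH, hmem⟩ ht
          · exact hl2 H hH hmem
    obtain ⟨l, hl1, hl2⟩ := main ((fun A : Σ V : Type, SimpleGraph V =>
        tau k A.2 (fun i : Fin 0 => i.elim0)) '' 𝒢) (Set.toFinite _)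
    refine ⟨l, hl1, fun H hH => ?_⟩
    obtain ⟨A, hAl, hAc⟩ := hl2 H hH ⟨H, hH, rfl⟩
    exact ⟨A, hAl, tau_eq_bf k A.2 H.2 _ _ hAc⟩
  obtain ⟨l, hl𝒢, hlcov⟩ := hrep
  obtain ⟨R₀, rest, rfl⟩ : ∃ R₀ rest, l = R₀ :: rest := by
    cases l with
    | nil =>
        obtain ⟨A, hA, _⟩ := hlcov A₀ hA₀
        exact absurd hA List.not_mem_nil
    | cons a t => exact ⟨a, t, rfl⟩
  refine ⟨sumListG (powG R₀ k) (rest.map fun R => powG R k), ?_, ?_⟩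
  · apply sumListG_mem hclosed'
    · exact powG_mem hclosed' (hl𝒢 R₀ List.mem_cons_self) k
    · intro B hB
      obtain ⟨R, hR, rfl⟩ := List.mem_map.mp hB
      exact powG_mem hclosed' (hl𝒢 R (List.mem_cons_of_mem _ hR)) k
  intro H hH
  set Gb := sumListG (powG R₀ k) (rest.map fun R => powG R k) with hGbdef
  obtain ⟨R, hRl, hRH⟩ := hlcov H hH
  have habs : EQk k (sumG Gb H) Gb := by
    have step1 : EQk k (sumG Gb H) (sumG Gb R) :=
      EQk.sumCongr (EQk.refl k Gb) (EQk.symm hRH)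
    have step2 : EQk k (sumG Gb R) Gb := by
      apply absorb_sumListG
      rcases List.mem_cons.mp hRl with rfl | hR'
      · left
        exact absorb k R
      · right
        exact ⟨powG R k, List.mem_map_of_mem hR', absorb k R⟩
    exact EQk.trans step1 step2
  have hBF : BF Gb.2 (Gb.2 ⊕g H.2) k (fun i : Fin 0 => i.elim0) (fun i : Fin 0 => i.elim0) :=
    EQk.symm habs
  apply Set.ext
  intro ψ
  simp only [Thk, Set.mem_setOf_eq]
  constructor
  · rintro ⟨hq, hr⟩
    exact ⟨hq, (sentence_bf hBF ψ hq).mp hr⟩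
  · rintro ⟨hq, hr⟩
    exact ⟨hq, (sentence_bf hBF ψ hq).mpr hr⟩


end RandomGraph
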